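/- arXiv:2307.08855 — 2 statements merged into one kernel-verified Lean document; each statement's English description precedes it below -/
import Mathlib

section
/- With Ω, η, ψ, and K as in the boundary-localized convolution setup, for every u ∈ C⁰(closure(Ω)) one has sup_{x ∈ Ω} |K_δ u(x) − u(x)| → 0 as δ → 0, where K_δ u(x) := ∫_Ω (δη(x))^{−d} ψ(|y−x|/(δη(x))) u(y) dy for δ ∈ (0,1]. -/
open MeasureTheory Metric

/-- Uniform convergence of the boundary-localized mollification `K_δ u` to `u` on `Ω`
as the bulk horizon parameter `δ ∈ (0,1]` tends to `0`:
`sup_{x ∈ Ω} |K_δ u(x) - u(x)| → 0` as `δ → 0`. -/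
theorem stmt_5 (d : ℕ) (hd : 1 ≤ d) (Ω : Set (EuclideanSpace ℝ (Fin d)))
    (hΩo : IsOpen Ω) (hΩb : Bornology.IsBounded Ω)
    (η : EuclideanSpace ℝ (Fin d) → ℝ) (hηc : ContinuousOn η (closure Ω))
    (hηpos : ∀ x ∈ Ω, 0 < η x) (hη0 : ∀ x ∈ frontier Ω, η x = 0)
    (hηd : ∀ x ∈ Ω, η x ≤ infDist x (frontier Ω) / 3)
    (ψ : ℝ → ℝ) (hψc : Continuous ψ) (hψ0 : ∀ t, 0 ≤ ψ t)
    (hψs : Function.support ψ ⊆ Set.Ioo (-1) 1)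
    (hψ1 : ∫ x : EuclideanSpace ℝ (Fin d), ψ ‖x‖ = 1)
    (u : EuclideanSpace ℝ (Fin d) → ℝ) (hu : ContinuousOn u (closure Ω)) :
    ∀ ε : ℝ, 0 < ε → ∃ δ₀ : ℝ, 0 < δ₀ ∧ δ₀ ≤ 1 ∧
      ∀ δ : ℝ, 0 < δ → δ ≤ δ₀ → ∀ x ∈ Ω,
        |(∫ y in Ω, ((δ * η x) ^ d)⁻¹ * ψ (‖y - x‖ / (δ * η x)) * u y) - u x| < ε := by
  classical
  intro ε hε
  by_cases hne : Ω.Nonempty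
  swap
  · exact ⟨1, one_pos, le_rfl, fun δ _ _ x hx => absurd ⟨x, hx⟩ hne⟩
  -- Ω is not the whole space
  have hΩuniv : Ω ≠ Set.univ := by
    intro h
    obtain ⟨R, hR⟩ := hΩb.subset_closedBall 0
    have hy : EuclideanSpace.single (⟨0, hd⟩ : Fin d) (|R| + 1) ∈ Ω := h ▸ Set.mem_univ _
    have := hR hy
    rw [mem_closedBall, dist_zero_right, EuclideanSpace.norm_single] at this
    have : |R| + 1 ≤ R := le_trans (le_abs_self _) this
    have := le_abs_self R
    linarith
  have hcls : IsCompact (closure Ω) := hΩb.isCompact_closure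
  -- Tietze extension of u
  obtain ⟨v, hv⟩ := ContinuousMap.exists_restrict_eq (Y := ℝ) isClosed_closure
    ⟨_, hu.restrict⟩
  have hvu : ∀ y ∈ closure Ω, v y = u y := fun y hy => by
    have := DFunLike.congr_fun hv ⟨y, hy⟩
    simpa using this
  -- uniform continuity of u on closure Ω
  have huc := hcls.uniformContinuousOn_of_continuous hu
  rw [Metric.uniformContinuousOn_iff] at huc
  obtain ⟨r, hr, hur⟩ := huc (ε / 2) (half_pos hε)
  -- bound on η
  obtain ⟨z, hz, hM'⟩ := hcls.exists_isMaxOn hne.closure hηc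
  have hM : ∀ y ∈ closure Ω, η y ≤ η z := hM'
  set M := η z with hMdef
  obtain ⟨x₀, hx₀⟩ := hne
  have hMpos : 0 < M := lt_of_lt_of_le (hηpos x₀ hx₀) (hM x₀ (subset_closure hx₀))
  refine ⟨min 1 (r / (2 * M)), lt_min one_pos (by positivity), min_le_left _ _,
    fun δ hδ hδ₀ x hx => ?_⟩
  set c := δ * η x with hcdef
  have hηx : 0 < η x := hηpos x hx
  have hc : 0 < c := mul_pos hδ hηx
  have hδ1 : δ ≤ 1 := hδ₀.trans (min_le_left _ _)
  have hcr : c < r := by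
    have h1 : c ≤ (r / (2 * M)) * M := by
      apply mul_le_mul (hδ₀.trans (min_le_right _ _)) (hM x (subset_closure hx))
        hηx.le (by positivity)
    have h2 : (r / (2 * M)) * M = r / 2 := by field_simp
    rw [h2] at h1
    linarith
  -- the mollifier
  set g : EuclideanSpace ℝ (Fin d) → ℝ := fun y => (c ^ d)⁻¹ * ψ (‖y - x‖ / c)
    with hgdef
  have hg0 : ∀ y, 0 ≤ g y := fun y => mul_nonneg (by positivity) (hψ0 _)
  have hgsupp : ∀ y, g y ≠ 0 → ‖y - x‖ < c := by
    intro y hy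
    have hψne : ψ (‖y - x‖ / c) ≠ 0 := right_ne_zero_of_mul hy
    have := hψs hψne
    exact (div_lt_one hc).mp this.2
  -- the closed ball of radius c around x lies inside Ω
  have hball : closedBall x c ⊆ Ω := by
    have hfr : infDist x (frontier Ω) ≤ infDist x Ωᶜ := by
      obtain ⟨y, hyf, heq⟩ := exists_mem_frontier_infDist_compl_eq_dist hx hΩuniv
      rw [heq]
      exact infDist_le_dist_of_mem hyf
    have h3 : 3 * η x ≤ infDist x (frontier Ω) := by
      have := hηd x hx; linarith
    have hlt : c < infDist x Ωᶜ := by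
      have hcη : c ≤ η x := by
        calc c = δ * η x := rfl
        _ ≤ 1 * η x := mul_le_mul_of_nonneg_right hδ1 hηx.le
        _ = η x := one_mul _
      linarith
    exact (closedBall_subset_ball hlt).trans ball_infDist_compl_subset
  have hgc : Continuous g :=
    continuous_const.mul (hψc.comp (((continuous_id.sub continuous_const).norm).div_const c))
  have hgcs : HasCompactSupport g := by
    apply HasCompactSupport.intro (isCompact_closedBall x c)
    intro y hy
    by_contra hgy
    exact hy (mem_closedBall.mpr (by rw [dist_eq_norm]; exact (hgsupp y hgy).le))
  have hgzero : ∀ y ∉ Ω, g y = 0 := by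
    intro y hy
    by_contra hgy
    exact hy (hball (mem_closedBall.mpr (by rw [dist_eq_norm]; exact (hgsupp y hgy).le)))
  -- the mollifier integrates to one over Ω
  have hcd : (0:ℝ) < c ^ d := by positivity
  have hI1 : ∫ y in Ω, g y = 1 := by
    rw [setIntegral_eq_integral_of_forall_compl_eq_zero hgzero]
    have h1 : ∫ y : EuclideanSpace ℝ (Fin d), g y
        = (c ^ d)⁻¹ * ∫ y : EuclideanSpace ℝ (Fin d), ψ (‖y - x‖ / c) :=
      integral_const_mul _ _
    have h2 : ∫ y : EuclideanSpace ℝ (Fin d), ψ (‖y - x‖ / c)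
        = ∫ y : EuclideanSpace ℝ (Fin d), ψ (‖y‖ / c) :=
      integral_sub_right_eq_self (fun y => ψ (‖y‖ / c)) x
    have h3 : ∫ y : EuclideanSpace ℝ (Fin d), ψ (‖y‖ / c)
        = ∫ y : EuclideanSpace ℝ (Fin d), (fun z => ψ ‖z‖) (c⁻¹ • y) := by
      congr 1
      ext y
      show ψ (‖y‖ / c) = ψ ‖c⁻¹ • y‖
      rw [norm_smul, Real.norm_eq_abs, abs_of_pos (inv_pos.mpr hc), div_eq_inv_mul]
    have h4 : ∫ y : EuclideanSpace ℝ (Fin d), (fun z => ψ ‖z‖) (c⁻¹ • y)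
        = |((c⁻¹) ^ Module.finrank ℝ (EuclideanSpace ℝ (Fin d)))⁻¹|
            • ∫ z : EuclideanSpace ℝ (Fin d), ψ ‖z‖ :=
      Measure.integral_comp_smul volume (fun z => ψ ‖z‖) c⁻¹
    rw [h1, h2, h3, h4, hψ1, finrank_euclideanSpace_fin, smul_eq_mul, mul_one,
      inv_pow, inv_inv, abs_of_pos hcd]
    exact inv_mul_cancel₀ hcd.ne'
  -- integrability
  have hgint : Integrable g := hgc.integrable_of_hasCompactSupport hgcs
  have hgv : Integrable (fun y => g y * v y) :=
    (hgc.mul v.continuous).integrable_of_hasCompactSupport (hgcs.mul_right)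
  -- replace u by v in the integral
  have hrw : (∫ y in Ω, ((δ * η x) ^ d)⁻¹ * ψ (‖y - x‖ / (δ * η x)) * u y)
      = ∫ y in Ω, g y * v y := by
    apply setIntegral_congr_fun hΩo.measurableSet
    intro y hy
    simp only [hgdef]
    rw [hvu y (subset_closure hy)]
  rw [hrw]
  -- difference as integral
  have hkey : (∫ y in Ω, g y * v y) - u x = ∫ y in Ω, g y * (v y - u x) := by
    have : ∫ y in Ω, g y * (v y - u x)
        = (∫ y in Ω, g y * v y) - ∫ y in Ω, g y * u x := by
      simp_rw [mul_sub]
      exact integral_sub hgv.integrableOn ((hgint.mul_const (u x)).integrableOn)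
    rw [this, integral_mul_const, hI1, one_mul]
  rw [hkey]
  -- bound the integral
  have hbound : |∫ y in Ω, g y * (v y - u x)| ≤ ε / 2 := by
    have habs : |∫ y in Ω, g y * (v y - u x)| ≤ ∫ y in Ω, |g y * (v y - u x)| := by
      simpa only [Real.norm_eq_abs] using
        norm_integral_le_integral_norm (μ := volume.restrict Ω) (fun y => g y * (v y - u x))
    have hint1 : IntegrableOn (fun y => |g y * (v y - u x)|) Ω := by
      have : Integrable (fun y => g y * (v y - u x)) := by
        have heq : (fun y => g y * (v y - u x))
            = fun y => g y * v y - g y * u x := by ext y; ring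
        rw [heq]
        exact hgv.sub (hgint.mul_const (u x))
      exact this.abs.integrableOn
    have hint2 : IntegrableOn (fun y => g y * (ε / 2)) Ω :=
      (hgint.mul_const (ε / 2)).integrableOn
    have hptwise : ∀ y ∈ Ω, |g y * (v y - u x)| ≤ g y * (ε / 2) := by
      intro y hy
      by_cases hgy : g y = 0
      · simp [hgy]
      · have hyc : ‖y - x‖ < c := hgsupp y hgy
        have hyΩ : y ∈ closure Ω := subset_closure hy
        have hdist : dist y x < r := by
          rw [dist_eq_norm]; exact hyc.trans hcr
        have huu : dist (u y) (u x) < ε / 2 :=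
          hur y hyΩ x (subset_closure hx) hdist
        rw [abs_mul, abs_of_nonneg (hg0 y)]
        apply mul_le_mul_of_nonneg_left _ (hg0 y)
        rw [hvu y hyΩ]
        rw [Real.dist_eq] at huu
        exact huu.le
    have hmono : ∫ y in Ω, |g y * (v y - u x)| ≤ ∫ y in Ω, g y * (ε / 2) :=
      setIntegral_mono_on hint1 hint2 hΩo.measurableSet hptwise
    have hfin : ∫ y in Ω, g y * (ε / 2) = ε / 2 := by
      rw [integral_mul_const, hI1, one_mul]
    linarith
  linarith
end

section
/- Let Ω ⊂ ℝ^d be open, let η_δ : Ω → (0,∞) be Lipschitz with constant κ₁δ < 1 and satisfy B(x, η_δ(x)) ⊂ Ω for all x ∈ Ω, and let ψ : ℝ → [0,∞) be bounded with support in (−1,1). Define ψ_δ(y,x) := η_δ(y)^{−d} ψ(|x−y|/η_δ(y)) and Ψ_δ(x) := ∫_Ω ψ_δ(y,x) dy. Then there is a constant C depending only on d, ‖ψ‖_∞, and κ₁δ such that Ψ_δ(x) ≤ C for all x ∈ Ω. -/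
open MeasureTheory Metric

/-- Uniform bound on the reversed-argument kernel mass
`Ψ_δ(x) = ∫_Ω η_δ(y)^{-d} ψ(|x-y|/η_δ(y)) dy`: there exists a constant `C`
(depending only on `d`, `‖ψ‖_∞` and the Lipschitz constant `κ₁δ < 1` of `η_δ`)
such that `Ψ_δ(x) ≤ C` for all `x ∈ Ω`. -/
theorem stmt_7 (d : ℕ) (hd : 1 ≤ d) (Ω : Set (EuclideanSpace ℝ (Fin d)))
    (hΩo : IsOpen Ω)
    (η : EuclideanSpace ℝ (Fin d) → ℝ) (κδ : ℝ) (hκδ0 : 0 < κδ) (hκδ1 : κδ < 1)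
    (hηpos : ∀ x ∈ Ω, 0 < η x)
    (hball : ∀ x ∈ Ω, ball x (η x) ⊆ Ω)
    (hlip : ∀ x ∈ Ω, ∀ y ∈ Ω, |η x - η y| ≤ κδ * ‖x - y‖)
    (ψ : ℝ → ℝ) (Mψ : ℝ) (hψm : Measurable ψ) (hψ0 : ∀ t, 0 ≤ ψ t)
    (hψb : ∀ t, ψ t ≤ Mψ)
    (hψs : Function.support ψ ⊆ Set.Ioo (-1) 1) :
    ∃ C : ℝ, 0 < C ∧ ∀ x ∈ Ω,
      (∫ y in Ω, ((η y) ^ d)⁻¹ * ψ (‖x - y‖ / η y)) ≤ C := by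
  haveI : Nontrivial (EuclideanSpace ℝ (Fin d)) := by
    apply Module.nontrivial_of_finrank_pos (R := ℝ)
    rw [finrank_euclideanSpace_fin]; omega
  have hMψ : 0 ≤ Mψ := (hψ0 0).trans (hψb 0)
  set B : ℝ := (volume (closedBall (0 : EuclideanSpace ℝ (Fin d)) 1)).toReal with hBdef
  have hB0 : 0 ≤ B := ENNReal.toReal_nonneg
  have h1κ : (0:ℝ) < 1 - κδ := by linarith
  have h1κ' : (0:ℝ) < 1 + κδ := by linarith
  refine ⟨Mψ * ((1 + κδ) / (1 - κδ)) ^ d * B + 1, by positivity, ?_⟩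
  intro x hx
  have hηx : 0 < η x := hηpos x hx
  set r : ℝ := η x / (1 - κδ) with hrdef
  have hr0 : 0 < r := div_pos hηx h1κ
  set K : ℝ := Mψ * ((1 + κδ) / η x) ^ d with hKdef
  have hK0 : 0 ≤ K := by positivity
  set g : EuclideanSpace ℝ (Fin d) → ℝ := (closedBall x r).indicator (fun _ => K) with hgdef
  have hg0 : ∀ y, 0 ≤ g y := fun y => Set.indicator_nonneg (fun _ _ => hK0) y
  have hgint : Integrable g volume := by
    rw [hgdef, integrable_indicator_iff measurableSet_closedBall]
    exact integrableOn_const measure_closedBall_lt_top.ne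
  have hpt : ∀ y ∈ Ω, ((η y) ^ d)⁻¹ * ψ (‖x - y‖ / η y) ≤ g y := by
    intro y hy
    have hηy : 0 < η y := hηpos y hy
    by_cases hzero : ψ (‖x - y‖ / η y) = 0
    · rw [hzero, mul_zero]; exact hg0 y
    · have hmem := hψs hzero
      have hratio : ‖x - y‖ / η y < 1 := hmem.2
      have hxy : ‖x - y‖ < η y := (div_lt_one hηy).1 hratio
      have hlipxy := hlip x hx y hy
      rw [abs_le] at hlipxy
      have hyx_up : η y < r := by
        have : η y ≤ η x + κδ * ‖x - y‖ := by linarith [hlipxy.1]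
        have h2 : η y * (1 - κδ) < η x := by nlinarith
        rw [hrdef, lt_div_iff₀ h1κ]; exact h2
      have hyx_lo : η x / (1 + κδ) ≤ η y := by
        have : η x ≤ η y + κδ * ‖x - y‖ := by linarith [hlipxy.2]
        have h2 : η x ≤ η y * (1 + κδ) := by nlinarith
        rw [div_le_iff₀ h1κ']; linarith
      have hymem : y ∈ closedBall x r := by
        rw [mem_closedBall, dist_comm, dist_eq_norm]
        exact (hxy.trans hyx_up).le
      rw [hgdef, Set.indicator_of_mem hymem]
      have hlo0 : 0 < η x / (1 + κδ) := div_pos hηx h1κ'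
      have hinv : ((η y) ^ d)⁻¹ ≤ ((1 + κδ) / η x) ^ d := by
        rw [← inv_pow]
        refine pow_le_pow_left₀ (inv_nonneg.2 hηy.le) ?_ d
        have h2 := inv_anti₀ hlo0 hyx_lo
        rwa [inv_div] at h2
      calc ((η y) ^ d)⁻¹ * ψ (‖x - y‖ / η y)
          ≤ ((1 + κδ) / η x) ^ d * Mψ :=
            mul_le_mul hinv (hψb _) (hψ0 _) (by positivity)
        _ = K := by rw [hKdef, mul_comm]
  have h1 : (∫ y in Ω, ((η y) ^ d)⁻¹ * ψ (‖x - y‖ / η y)) ≤ ∫ y in Ω, g y := by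
    refine integral_mono_of_nonneg ?_ (hgint.restrict) ?_
    · refine (ae_restrict_iff' hΩo.measurableSet).2 (ae_of_all _ fun y hy => ?_)
      exact mul_nonneg (inv_nonneg.2 (pow_nonneg (hηpos y hy).le d)) (hψ0 _)
    · exact (ae_restrict_iff' hΩo.measurableSet).2 (ae_of_all _ hpt)
  have h2 : (∫ y in Ω, g y) ≤ ∫ y, g y :=
    setIntegral_le_integral hgint (ae_of_all _ hg0)
  have h3 : (∫ y, g y) = K * (volume (closedBall x r)).toReal := by
    rw [hgdef, integral_indicator measurableSet_closedBall, setIntegral_const,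
      smul_eq_mul, mul_comm]
    rfl
  have hvol : (volume (closedBall x r)).toReal = r ^ d * B := by
    rw [Measure.addHaar_closedBall volume x hr0.le, finrank_euclideanSpace_fin,
      ← Measure.addHaar_closedBall_eq_addHaar_ball,
      ENNReal.toReal_mul, ENNReal.toReal_ofReal (by positivity)]
  have hfinal : K * (r ^ d * B) = Mψ * ((1 + κδ) / (1 - κδ)) ^ d * B := by
    rw [hKdef, hrdef]
    rw [div_pow, div_pow, div_pow]
    field_simp
  have := h1.trans (h2.trans_eq (by rw [h3, hvol, hfinal]))
  linarith
end
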